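/- (Uniform law of large numbers for sampling discretization of infinitely wide models.) Let V be a measurable space, μ a finite signed Borel measure on V with ‖μ‖_{TV} := |μ|(V) > 0, P_μ := |μ| / ‖μ‖_{TV}, and h := dμ/d|μ| the Radon–Nikodym derivative (so |h| = 1 on V, |μ|-a.e.). Let H be a real Hilbert space and Ψ : V → H a strongly measurable feature map with kernel K(v,v') := ⟨Ψ(v), Ψ(v')⟩_H, and assume C² := ∫_V K(v,v) dP_μ(v) < ∞. Let φ : X × V → ℝ be such that for each x ∈ X there exists g_x ∈ H with φ(x;v) = ⟨g_x, Ψ(v)⟩_H and ‖g_x‖_H ≤ B. Let v₁, …, v_p be i.i.d. with law P_μ and set w_j := (‖μ‖_{TV}/p) h(v_j). Then E[ sup_{x ∈ X} | Σ_{j=1}^p w_j φ(x;v_j) − S[μ](x) | ] ≤ 4 B C ‖μ‖_{TV} / √p, where S[μ](x) := ∫_V φ(x;v) dμ(v). -/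

import Mathlib

open MeasureTheory

local notation "⟪" x ", " y "⟫" => @inner ℝ _ _ x y

lemma evalMP {V : Type*} [MeasurableSpace V] (P : Measure V) [IsProbabilityMeasure P]
    {n : ℕ} (i : Fin n) :
    MeasurePreserving (fun vs : Fin n → V => vs i) (Measure.pi fun _ => P) P := by
  refine ⟨measurable_pi_apply i, ?_⟩
  ext s hs
  rw [Measure.map_apply (measurable_pi_apply i) hs]
  have : (Function.eval i ⁻¹' s : Set (Fin n → V)) =
      Set.pi Set.univ (Function.update (fun _ => Set.univ) i s) := by
    rw [Set.eval_preimage]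
  rw [show (fun vs : Fin n → V => vs i) ⁻¹' s = Function.eval i ⁻¹' s from rfl, this,
    Measure.pi_pi]
  simp [Function.update_apply, apply_ite P, Finset.prod_ite_eq']

lemma eval_integral {V H : Type*} [MeasurableSpace V] [NormedAddCommGroup H]
    [NormedSpace ℝ H] (P : Measure V) [IsProbabilityMeasure P]
    {n : ℕ} (i : Fin n) {g : V → H} (hg : AEStronglyMeasurable g P) :
    ∫ y : Fin n → V, g (y i) ∂(Measure.pi fun _ => P) = ∫ v, g v ∂P := by
  have h := (evalMP P i).map_eq
  calc ∫ y : Fin n → V, g (y i) ∂(Measure.pi fun _ => P)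
      = ∫ v, g v ∂(Measure.map (fun vs : Fin n → V => vs i) (Measure.pi fun _ => P)) :=
        (integral_map (measurable_pi_apply i).aemeasurable (by rw [h]; exact hg)).symm
    _ = ∫ v, g v ∂P := by rw [h]

lemma l1_le_l2 {Ω H : Type*} [MeasurableSpace Ω] [NormedAddCommGroup H]
    (P : Measure Ω) [IsProbabilityMeasure P] {f : Ω → H} (hf : MemLp f 2 P) :
    ∫ x, ‖f x‖ ∂P ≤ Real.sqrt (∫ x, ‖f x‖ ^ 2 ∂P) := by
  have h2 : (∫ x, ‖f x‖ ∂P) ^ 2 ≤ ∫ x, ‖f x‖ ^ 2 ∂P := by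
    have hv := ProbabilityTheory.variance_nonneg (fun x => ‖f x‖) P
    rw [ProbabilityTheory.variance_eq_sub hf.norm] at hv
    simp only [Pi.pow_apply] at hv
    linarith [hv]
  have h0 : 0 ≤ ∫ x, ‖f x‖ ∂P := integral_nonneg fun x => norm_nonneg _
  exact (Real.le_sqrt h0 (integral_nonneg fun x => sq_nonneg _)).mpr h2

lemma pi_sum_sq {V H : Type*} [MeasurableSpace V] [NormedAddCommGroup H]
    [InnerProductSpace ℝ H] [CompleteSpace H]
    (P : Measure V) [IsProbabilityMeasure P] (f : V → H) (hf : MemLp f 2 P)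
    (hf0 : ∫ v, f v ∂P = 0) :
    ∀ n : ℕ, ∫ vs : Fin n → V, ‖∑ j, f (vs j)‖ ^ 2 ∂(Measure.pi fun _ => P)
      = n * ∫ v, ‖f v‖ ^ 2 ∂P := by
  intro n
  induction n with
  | zero => simp
  | succ n ih =>
    set Q : Measure (Fin n → V) := Measure.pi fun _ => P with hQ
    haveI : IsProbabilityMeasure Q := by rw [hQ]; infer_instance
    set S : (Fin n → V) → H := fun y => ∑ j, f (y j) with hSdef
    have hfj : ∀ j : Fin n, MemLp (fun y : Fin n → V => f (y j)) 2 Q := fun j =>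
      hf.comp_measurePreserving (evalMP P j)
    have hS2 : MemLp S 2 Q :=
      memLp_finset_sum (μ := Q) Finset.univ (f := fun j (y : Fin n → V) => f (y j))
        (fun j _ => hfj j)
    have hf1 : Integrable f P := hf.integrable one_le_two
    have hS1 : Integrable S Q := hS2.integrable one_le_two
    have hSint : ∫ y, S y ∂Q = 0 := by
      rw [hSdef, integral_finset_sum _ (fun j _ => (hfj j).integrable one_le_two)]
      have : ∀ j : Fin n, ∫ y : Fin n → V, f (y j) ∂Q = ∫ v, f v ∂P := fun j =>
        eval_integral P j hf.aestronglyMeasurable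
    -- decompose the product
      simp [this, hf0]
    have hmp : MeasurePreserving
        (MeasurableEquiv.piFinSuccAbove (fun _ : Fin (n + 1) => V) 0).symm
        (P.prod Q) (Measure.pi fun _ : Fin (n + 1) => P) :=
      (measurePreserving_piFinSuccAbove (fun _ : Fin (n + 1) => P) 0).symm
    rw [← hmp.integral_comp' (fun vs => ‖∑ j, f (vs j)‖ ^ 2)]
    have hpt : ∀ z : V × (Fin n → V),
        ‖∑ j : Fin (n + 1),
            f ((MeasurableEquiv.piFinSuccAbove (fun _ : Fin (n+1) => V) 0).symm z j)‖ ^ 2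
        = ‖f z.1‖ ^ 2 + 2 * ⟪f z.1, S z.2⟫ + ‖S z.2‖ ^ 2 := by
      intro z
      have hsum : ∑ j : Fin (n + 1),
          f ((MeasurableEquiv.piFinSuccAbove (fun _ : Fin (n+1) => V) 0).symm z j)
          = f z.1 + S z.2 := by
        have h0 : (MeasurableEquiv.piFinSuccAbove (fun _ : Fin (n+1) => V) 0).symm z 0 = z.1 := by
          simp [MeasurableEquiv.piFinSuccAbove]
        have hs : ∀ j : Fin n,
            (MeasurableEquiv.piFinSuccAbove (fun _ : Fin (n+1) => V) 0).symm z j.succ = z.2 j :=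
          fun j => by simp [MeasurableEquiv.piFinSuccAbove]
        rw [Fin.sum_univ_succ, h0]
        simp only [hs, hSdef]
      rw [hsum, norm_add_sq_real]
    simp only [hpt]
    -- measurability on the product
    have hfst : MeasurePreserving Prod.fst (P.prod Q) P :=
      ⟨measurable_fst, by simp [Measure.map_fst_prod]⟩
    have hsnd : MeasurePreserving Prod.snd (P.prod Q) Q :=
      ⟨measurable_snd, by simp [Measure.map_snd_prod]⟩
    have hfm : AEStronglyMeasurable (fun z : V × (Fin n → V) => f z.1) (P.prod Q) :=
      hf.aestronglyMeasurable.comp_measurePreserving hfst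
    have hSm : AEStronglyMeasurable (fun z : V × (Fin n → V) => S z.2) (P.prod Q) :=
      hS2.aestronglyMeasurable.comp_measurePreserving hsnd
    -- integrability of the three pieces
    have hfsq : Integrable (fun v => ‖f v‖ ^ 2) P :=
      (memLp_two_iff_integrable_sq_norm hf.aestronglyMeasurable).mp hf
    have hSsq : Integrable (fun y => ‖S y‖ ^ 2) Q :=
      (memLp_two_iff_integrable_sq_norm hS2.aestronglyMeasurable).mp hS2
    have hI1 : Integrable (fun z : V × (Fin n → V) => ‖f z.1‖ ^ 2) (P.prod Q) :=
      (hfst.integrable_comp hfsq.aestronglyMeasurable).mpr hfsq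
    have hI3 : Integrable (fun z : V × (Fin n → V) => ‖S z.2‖ ^ 2) (P.prod Q) :=
      (hsnd.integrable_comp hSsq.aestronglyMeasurable).mpr hSsq
    have hI2 : Integrable (fun z : V × (Fin n → V) => ⟪f z.1, S z.2⟫) (P.prod Q) := by
      have hb : Integrable (fun z : V × (Fin n → V) => ‖f z.1‖ * ‖S z.2‖) (P.prod Q) :=
        Integrable.mul_prod hf1.norm hS1.norm
      refine hb.mono' (hfm.inner hSm) ?_
      filter_upwards with z
      simpa using abs_real_inner_le_norm (f z.1) (S z.2)
    -- compute
    have hI12 : Integrable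
        (fun z : V × (Fin n → V) => ‖f z.1‖ ^ 2 + 2 * ⟪f z.1, S z.2⟫) (P.prod Q) := by
      exact hI1.add (hI2.const_mul 2)
    have hI2' : Integrable (fun z : V × (Fin n → V) => 2 * ⟪f z.1, S z.2⟫) (P.prod Q) :=
      hI2.const_mul 2
    rw [integral_add hI12 hI3, integral_add hI1 hI2', integral_const_mul]
    have e1 : ∫ z : V × (Fin n → V), ‖f z.1‖ ^ 2 ∂(P.prod Q) = ∫ v, ‖f v‖ ^ 2 ∂P := by
      have h := integral_map (μ := P.prod Q) measurable_fst.aemeasurable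
        (f := fun v => ‖f v‖ ^ 2) (by rw [hfst.map_eq]; exact hfsq.aestronglyMeasurable)
      rw [hfst.map_eq] at h
      exact h.symm
    have e3 : ∫ z : V × (Fin n → V), ‖S z.2‖ ^ 2 ∂(P.prod Q) = ∫ y, ‖S y‖ ^ 2 ∂Q := by
      have h := integral_map (μ := P.prod Q) measurable_snd.aemeasurable
        (f := fun y => ‖S y‖ ^ 2) (by rw [hsnd.map_eq]; exact hSsq.aestronglyMeasurable)
      rw [hsnd.map_eq] at h
      exact h.symm
    have e2 : ∫ z : V × (Fin n → V), ⟪f z.1, S z.2⟫ ∂(P.prod Q) = 0 := by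
      rw [integral_prod _ hI2]
      have : ∀ v : V, ∫ y, ⟪f v, S y⟫ ∂Q = ⟪f v, (0 : H)⟫ := by
        intro v
        rw [integral_inner hS1, hSint]
      simp [this]
    rw [e1, e2, e3, ih]
    push_cast
    ring


set_option maxHeartbeats 1000000 in
theorem stmt_16 {X V H : Type*} [MeasurableSpace V]
    [NormedAddCommGroup H] [InnerProductSpace ℝ H] [CompleteSpace H]
    (ν : Measure V) [IsFiniteMeasure ν] (hTV : 0 < (ν Set.univ).toReal)
    (hd : V → ℝ) (hhdm : Measurable hd) (hhd1 : ∀ᵐ v ∂ν, |hd v| = 1)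
    (Pμ : Measure V) (hPμ : Pμ = (ν Set.univ)⁻¹ • ν)
    (Ψ : V → H) (hΨm : StronglyMeasurable Ψ)
    (hΨ2 : Integrable (fun v => ‖Ψ v‖ ^ 2) Pμ)
    (C : ℝ) (hC : C = Real.sqrt (∫ v, ‖Ψ v‖ ^ 2 ∂Pμ))
    (φ : X → V → ℝ) (g : X → H) (B : ℝ) (hB : 0 ≤ B)
    (hφ : ∀ x v, φ x v = ⟪g x, Ψ v⟫) (hgB : ∀ x, ‖g x‖ ≤ B)
    (p : ℕ) (hp : 0 < p) :
    (∫ vs : Fin p → V,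
        sSup {r : ℝ | ∃ x : X,
          r = |(∑ j, (((ν Set.univ).toReal / (p : ℝ)) * hd (vs j)) * φ x (vs j)) -
                ∫ v, hd v * φ x v ∂ν|}
        ∂(Measure.pi fun _ : Fin p => Pμ)) ≤
      4 * B * C * (ν Set.univ).toReal / Real.sqrt p := by
  set TV : ℝ := (ν Set.univ).toReal with hTVdef
  have hν0 : ν Set.univ ≠ 0 := by
    intro h; rw [hTVdef, h] at hTV; simp at hTV
  have hνtop : ν Set.univ ≠ ⊤ := measure_ne_top ν _
  have hpR : (0 : ℝ) < p := Nat.cast_pos.mpr hp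
  haveI hPprob : IsProbabilityMeasure Pμ := by
    constructor
    rw [hPμ, Measure.smul_apply, smul_eq_mul, ENNReal.inv_mul_cancel hν0 hνtop]
  haveI : IsProbabilityMeasure (Measure.pi fun _ : Fin p => Pμ) := by infer_instance
  have hC0 : 0 ≤ C := hC ▸ Real.sqrt_nonneg _
  -- the H-valued integrand
  set G : V → H := fun v => hd v • Ψ v with hGdef
  have hGsm : StronglyMeasurable G := hhdm.stronglyMeasurable.smul hΨm
  have hhd1P : ∀ᵐ v ∂Pμ, |hd v| = 1 := by rw [hPμ]; exact Measure.ae_smul_measure hhd1 _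
  have hGnormP : ∀ᵐ v ∂Pμ, ‖G v‖ = ‖Ψ v‖ := by
    filter_upwards [hhd1P] with v hv
    rw [hGdef]; simp only [norm_smul, Real.norm_eq_abs, hv, one_mul]
  have hGL2 : MemLp G 2 Pμ := by
    rw [memLp_two_iff_integrable_sq_norm hGsm.aestronglyMeasurable]
    exact hΨ2.congr (by filter_upwards [hGnormP] with v hv using by rw [hv])
  have hΨL2 : MemLp Ψ 2 Pμ := by
    rw [memLp_two_iff_integrable_sq_norm hΨm.aestronglyMeasurable]
    exact hΨ2
  have hGint : Integrable G Pμ := hGL2.integrable one_le_two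
  have hνeq : (ν Set.univ) • Pμ = ν := by
    rw [hPμ, smul_smul, ENNReal.mul_inv_cancel hν0 hνtop, one_smul]
  have hGintν : Integrable G ν := by
    rw [← hνeq]; exact hGint.smul_measure hνtop
  set m : H := ∫ v, G v ∂Pμ with hmdef
  set f : V → H := fun v => G v - m with hfdef
  have hfL2 : MemLp f 2 Pμ := hGL2.sub (memLp_const m)
  have hf0 : ∫ v, f v ∂Pμ = 0 := by
    rw [hfdef]
    rw [integral_sub hGint (integrable_const m), integral_const]
    simp [hmdef]
  set M : H := ∫ v, G v ∂ν with hMdef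
  have hmM : m = TV⁻¹ • M := by
    rw [hmdef, hPμ, integral_smul_measure, ENNReal.toReal_inv, hMdef]
  have hMm : M = TV • m := by
    rw [hmM, smul_smul, mul_inv_cancel₀ (ne_of_gt hTV), one_smul]
  -- centered empirical process
  set SS : (Fin p → V) → H := fun vs => ∑ j, f (vs j) with hSSdef
  set Z : (Fin p → V) → H := fun vs => (TV / p) • SS vs with hZdef
  have hSS2 : MemLp SS 2 (Measure.pi fun _ : Fin p => Pμ) :=
    memLp_finset_sum Finset.univ (f := fun j (vs : Fin p → V) => f (vs j))
      (fun j _ => hfL2.comp_measurePreserving (evalMP Pμ j))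
  have hZ2 : MemLp Z 2 (Measure.pi fun _ : Fin p => Pμ) := by
    have := hSS2.const_smul (TV / p)
    exact this
  -- the key pointwise identity
  have key : ∀ (vs : Fin p → V) (x : X),
      (∑ j, ((TV / p) * hd (vs j)) * φ x (vs j)) - (∫ v, hd v * φ x v ∂ν)
        = ⟪g x, Z vs⟫ := by
    intro vs x
    have h1 : ∀ v, hd v * φ x v = ⟪g x, G v⟫ := by
      intro v
      rw [hφ, hGdef, real_inner_smul_right]
    have h2 : ∫ v, hd v * φ x v ∂ν = ⟪g x, M⟫ := by
      simp only [h1]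
      rw [hMdef, integral_inner hGintν]
    have h3 : ∀ j, ((TV / p) * hd (vs j)) * φ x (vs j)
        = ⟪g x, (TV / p) • G (vs j)⟫ := by
      intro j
      rw [hφ, hGdef, real_inner_smul_right, real_inner_smul_right]
      ring
    have h4 : (∑ j, (TV / p) • G (vs j)) - M = Z vs := by
      simp only [hZdef, hSSdef, hfdef, Finset.smul_sum, smul_sub]
      rw [Finset.sum_sub_distrib, Finset.sum_const, Finset.card_univ, Fintype.card_fin]
      congr 1
      rw [← Nat.cast_smul_eq_nsmul ℝ p, smul_smul, hMm]
      congr 1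
      rw [mul_comm, div_mul_cancel₀ TV (ne_of_gt hpR)]
    calc (∑ j, ((TV / p) * hd (vs j)) * φ x (vs j)) - (∫ v, hd v * φ x v ∂ν)
        = (∑ j, ⟪g x, (TV / p) • G (vs j)⟫) - ⟪g x, M⟫ := by
          rw [h2]; congr 1; exact Finset.sum_congr rfl fun j _ => h3 j
      _ = ⟪g x, (∑ j, (TV / p) • G (vs j)) - M⟫ := by
          rw [inner_sub_right, inner_sum]
      _ = ⟪g x, Z vs⟫ := by rw [h4]
  -- pointwise bound on the supremum
  have hbound : ∀ vs : Fin p → V,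
      sSup {r : ℝ | ∃ x : X,
          r = |(∑ j, ((TV / p) * hd (vs j)) * φ x (vs j)) - ∫ v, hd v * φ x v ∂ν|}
        ≤ B * ‖Z vs‖ := by
    intro vs
    refine Real.sSup_le ?_ (mul_nonneg hB (norm_nonneg _))
    rintro r ⟨x, rfl⟩
    rw [key vs x]
    exact (abs_real_inner_le_norm _ _).trans
      (mul_le_mul_of_nonneg_right (hgB x) (norm_nonneg _))
  have hZint : Integrable (fun vs => B * ‖Z vs‖) (Measure.pi fun _ : Fin p => Pμ) :=
    ((hZ2.integrable one_le_two).norm).const_mul B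
  have step1 : (∫ vs : Fin p → V,
      sSup {r : ℝ | ∃ x : X,
          r = |(∑ j, ((TV / p) * hd (vs j)) * φ x (vs j)) - ∫ v, hd v * φ x v ∂ν|}
        ∂(Measure.pi fun _ : Fin p => Pμ))
      ≤ ∫ vs, B * ‖Z vs‖ ∂(Measure.pi fun _ : Fin p => Pμ) := by
    refine integral_mono_of_nonneg (ae_of_all _ fun vs => ?_) hZint (ae_of_all _ hbound)
    exact Real.sSup_nonneg (by rintro r ⟨x, rfl⟩; exact abs_nonneg _)
  -- second moment computation
  have hC2 : ∫ v, ‖Ψ v‖ ^ 2 ∂Pμ = C ^ 2 := by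
    rw [hC, Real.sq_sqrt (integral_nonneg fun v => sq_nonneg _)]
  have hmC : ‖m‖ ≤ C := by
    calc ‖m‖ ≤ ∫ v, ‖G v‖ ∂Pμ := norm_integral_le_integral_norm _
      _ = ∫ v, ‖Ψ v‖ ∂Pμ := integral_congr_ae hGnormP
      _ ≤ Real.sqrt (∫ v, ‖Ψ v‖ ^ 2 ∂Pμ) := l1_le_l2 Pμ hΨL2
      _ = C := by rw [hC2, Real.sqrt_sq hC0]
  have hfsq_int : Integrable (fun v => ‖f v‖ ^ 2) Pμ :=
    (memLp_two_iff_integrable_sq_norm hfL2.aestronglyMeasurable).mp hfL2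
  have hf_sq_le : ∫ v, ‖f v‖ ^ 2 ∂Pμ ≤ 4 * C ^ 2 := by
    have hle : ∀ᵐ v ∂Pμ, ‖f v‖ ^ 2 ≤ 2 * ‖Ψ v‖ ^ 2 + 2 * C ^ 2 := by
      filter_upwards [hGnormP] with v hv
      have h1 : ‖f v‖ ≤ ‖G v‖ + ‖m‖ := norm_sub_le _ _
      have h2 : ‖G v‖ = ‖Ψ v‖ := hv
      have h3 : ‖f v‖ ≤ ‖Ψ v‖ + C := by
        refine h1.trans ?_
        rw [h2]
        exact add_le_add_right hmC _
      have h4 : ‖f v‖ ^ 2 ≤ (‖Ψ v‖ + C) ^ 2 := by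
        have := pow_le_pow_left₀ (norm_nonneg (f v)) h3 2
        exact this
      nlinarith [sq_nonneg (‖Ψ v‖ - C)]
    have hint : Integrable (fun v => 2 * ‖Ψ v‖ ^ 2 + 2 * C ^ 2) Pμ :=
      (hΨ2.const_mul 2).add (integrable_const _)
    calc ∫ v, ‖f v‖ ^ 2 ∂Pμ ≤ ∫ v, (2 * ‖Ψ v‖ ^ 2 + 2 * C ^ 2) ∂Pμ :=
          integral_mono_ae hfsq_int hint hle
      _ = 2 * (∫ v, ‖Ψ v‖ ^ 2 ∂Pμ) + 2 * C ^ 2 := by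
          rw [integral_add (hΨ2.const_mul 2) (integrable_const _), integral_const_mul,
            integral_const]
          simp
      _ = 4 * C ^ 2 := by rw [hC2]; ring
  have hTVp : (0:ℝ) ≤ TV / p := div_nonneg hTV.le hpR.le
  have hZsq : ∫ vs, ‖Z vs‖ ^ 2 ∂(Measure.pi fun _ : Fin p => Pμ)
      = (TV / p) ^ 2 * (p * ∫ v, ‖f v‖ ^ 2 ∂Pμ) := by
    have hnorm : ∀ vs, ‖Z vs‖ ^ 2 = (TV / p) ^ 2 * ‖SS vs‖ ^ 2 := by
      intro vs
      rw [hZdef, norm_smul, Real.norm_eq_abs, abs_of_nonneg hTVp, mul_pow]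
    simp only [hnorm]
    rw [integral_const_mul, pi_sum_sq Pμ f hfL2 hf0 p]
  have hZsq_le : ∫ vs, ‖Z vs‖ ^ 2 ∂(Measure.pi fun _ : Fin p => Pμ)
      ≤ 4 * TV ^ 2 * C ^ 2 / p := by
    rw [hZsq]
    have : (TV / p) ^ 2 * (p * ∫ v, ‖f v‖ ^ 2 ∂Pμ)
        ≤ (TV / p) ^ 2 * (p * (4 * C ^ 2)) := by
      have := mul_le_mul_of_nonneg_left hf_sq_le hpR.le
      exact mul_le_mul_of_nonneg_left this (sq_nonneg _)
    refine this.trans (le_of_eq ?_)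
    field_simp
  have hZl1 : ∫ vs, ‖Z vs‖ ∂(Measure.pi fun _ : Fin p => Pμ)
      ≤ 2 * TV * C / Real.sqrt p := by
    have h1 := l1_le_l2 (Measure.pi fun _ : Fin p => Pμ) hZ2
    have h2 : Real.sqrt (∫ vs, ‖Z vs‖ ^ 2 ∂(Measure.pi fun _ : Fin p => Pμ))
        ≤ Real.sqrt (4 * TV ^ 2 * C ^ 2 / p) := Real.sqrt_le_sqrt hZsq_le
    have hnn : (0:ℝ) ≤ 2 * TV * C / Real.sqrt p :=
      div_nonneg (by positivity) (Real.sqrt_nonneg _)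
    have h3 : Real.sqrt (4 * TV ^ 2 * C ^ 2 / p) = 2 * TV * C / Real.sqrt p := by
      rw [show 4 * TV ^ 2 * C ^ 2 / (p:ℝ) = (2 * TV * C / Real.sqrt p) ^ 2 by
        rw [div_pow, Real.sq_sqrt hpR.le]; ring]
      rw [Real.sqrt_sq hnn]
    exact h1.trans (h2.trans_eq h3)
  have step2 : ∫ vs, B * ‖Z vs‖ ∂(Measure.pi fun _ : Fin p => Pμ)
      ≤ 4 * B * C * TV / Real.sqrt p := by
    rw [integral_const_mul]
    calc B * ∫ vs, ‖Z vs‖ ∂(Measure.pi fun _ : Fin p => Pμ)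
        ≤ B * (2 * TV * C / Real.sqrt p) := by
          refine mul_le_mul_of_nonneg_left hZl1 hB
      _ = 2 * B * TV * C / Real.sqrt p := by ring
      _ ≤ 4 * B * C * TV / Real.sqrt p := by
          have hsp : 0 < Real.sqrt p := Real.sqrt_pos.mpr hpR
          rw [div_le_div_iff₀ hsp hsp]
          nlinarith [mul_nonneg (mul_nonneg hB hTV.le) hC0, hsp]
  exact step1.trans step2
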